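/- Let d ≥ 1, let ρ > 0, L_f > 0, L_g > 0, and γ > 0 satisfy γρ < 1 and γL_g ≤ 1/2. Let f : ℝ^d → ℝ be differentiable with ∇f Lipschitz continuous with constant L_f, and let g : ℝ^d → ℝ be ρ-weakly convex and twice continuously differentiable with ‖∇²g(z)‖ ≤ L_g (operator norm) for every z in the image Prox_{γg}(ℝ^d). Define the drift b^γ : ℝ^d → ℝ^d by b^γ(y) = ∇f(y − γ∇g^γ(y)) + ∇g^γ(y). Then b^γ is Lipschitz continuous on ℝ^d with Lipschitz constant 2L_f + 2L_g. -/

import Mathlib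

open scoped RealInnerProductSpace

lemma convex_first_order {E : Type*} [NormedAddCommGroup E] [InnerProductSpace ℝ E]
    [CompleteSpace E] {h : E → ℝ} (hc : ConvexOn ℝ Set.univ h) {v a : E}
    (hg : HasGradientAt h v a) (b : E) : ⟪v, b - a⟫ ≤ h b - h a := by
  set ψ : ℝ → ℝ := fun t => h (a + t • (b - a)) with hψdef
  have hline : HasDerivAt (fun t : ℝ => a + t • (b - a)) (b - a) 0 := by
    simpa using ((hasDerivAt_id (0:ℝ)).smul_const (b - a)).const_add a
  have hψ : HasDerivAt ψ ⟪v, b - a⟫ 0 := by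
    have ha : HasFDerivAt h ((InnerProductSpace.toDual ℝ E) v) (a + (0:ℝ) • (b - a)) := by
      simpa using hasGradientAt_iff_hasFDerivAt.mp hg
    have h2 := ha.comp_hasDerivAt (x := (0:ℝ)) hline
    simp only [InnerProductSpace.toDual_apply_apply] at h2
    exact h2
  have hslope := hasDerivAt_iff_tendsto_slope.mp hψ
  have hslope' : Filter.Tendsto (slope ψ 0) (nhdsWithin 0 (Set.Ioi 0)) (nhds ⟪v, b - a⟫) :=
    hslope.mono_left (nhdsWithin_mono 0 (fun t ht => ne_of_gt ht))
  refine le_of_tendsto hslope' ?_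
  filter_upwards [Ioo_mem_nhdsGT (zero_lt_one)] with t ht
  have ht0 : 0 < t := ht.1
  have ht1 : t < 1 := ht.2
  have hconv := hc.2 (Set.mem_univ a) (Set.mem_univ b)
    (by linarith : (0:ℝ) ≤ 1 - t) (le_of_lt ht0) (by ring)
  have heq : (1 - t) • a + t • b = a + t • (b - a) := by
    rw [smul_sub, sub_smul, one_smul]; abel
  rw [heq, smul_eq_mul, smul_eq_mul] at hconv
  have key : ψ t - ψ 0 ≤ t * (h b - h a) := by
    simp only [ψ, zero_smul, add_zero]
    calc h (a + t • (b - a)) - h a ≤ ((1 - t) * h a + t * h b) - h a := by linarith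
    _ = t * (h b - h a) := by ring
  rw [slope_def_field, sub_zero, div_le_iff₀ ht0]
  linarith [key]

lemma convex_grad_mono {E : Type*} [NormedAddCommGroup E] [InnerProductSpace ℝ E]
    [CompleteSpace E] {h : E → ℝ} (hc : ConvexOn ℝ Set.univ h) {va vb a b : E}
    (hga : HasGradientAt h va a) (hgb : HasGradientAt h vb b) :
    0 ≤ ⟪va - vb, a - b⟫ := by
  have h1 := convex_first_order hc hga b
  have h2 := convex_first_order hc hgb a
  have e1 : ⟪va, b - a⟫ = -⟪va, a - b⟫ := by rw [← neg_sub a b, inner_neg_right]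
  rw [e1] at h1
  rw [inner_sub_left]
  linarith


theorem psgla_aux {E : Type*} [NormedAddCommGroup E] [InnerProductSpace ℝ E]
    [CompleteSpace E] (ρ Lf Lg γ : ℝ)
    (hρ : 0 < ρ) (hLf : 0 < Lf) (hLg : 0 < Lg) (hγ : 0 < γ)
    (hγρ : γ * ρ < 1) (hγLg : γ * Lg ≤ 1 / 2)
    (f' : E → E)
    (hf'lip : ∀ x y : E, ‖f' x - f' y‖ ≤ Lf * ‖x - y‖)
    (g : E → ℝ)
    (hweak : ConvexOn ℝ Set.univ (fun x => g x + ρ / 2 * ‖x‖ ^ 2))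
    (g' : E → E) (g'' : E → (E →L[ℝ] E))
    (hg' : ∀ x, HasGradientAt g (g' x) x)
    (hg'' : ∀ x, HasFDerivAt g' (g'' x) x)
    (hg''cont : Continuous g'')
    (prox : E → E)
    (hprox : ∀ x y : E,
      1 / (2 * γ) * ‖x - prox x‖ ^ 2 + g (prox x)
        ≤ 1 / (2 * γ) * ‖x - y‖ ^ 2 + g y)
    (hbound : ∀ z ∈ Set.range prox, ‖g'' z‖ ≤ Lg) :
    ∀ x y : E,
      ‖(f' (x - γ • (γ⁻¹ • (x - prox x))) + γ⁻¹ • (x - prox x))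
          - (f' (y - γ • (γ⁻¹ • (y - prox y))) + γ⁻¹ • (y - prox y))‖
        ≤ (2 * Lf + 2 * Lg) * ‖x - y‖ := by
  -- first-order optimality condition for the prox
  have hfoc : ∀ w : E, g' (prox w) = γ⁻¹ • (w - prox w) := by
    intro w
    set p := prox w with hp
    have hmin : IsLocalMin (fun y : E => 1 / (2 * γ) * ‖w - y‖ ^ 2 + g y) p :=
      Filter.Eventually.of_forall (fun y => hprox w y)
    have hsub : HasFDerivAt (fun y : E => w - y) (0 - ContinuousLinearMap.id ℝ E) p :=
      (hasFDerivAt_const w p).sub (hasFDerivAt_id p)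
    have hq0 := HasFDerivAt.inner ℝ hsub hsub
    have hfe : (fun y : E => ‖w - y‖ ^ 2) = fun y : E => (⟪w - y, w - y⟫ : ℝ) :=
      funext fun y => (real_inner_self_eq_norm_sq _).symm
    have hq : HasFDerivAt (fun y : E => ‖w - y‖ ^ 2)
        ((fderivInnerCLM ℝ (w - p, w - p)).comp
          ((0 - ContinuousLinearMap.id ℝ E).prod (0 - ContinuousLinearMap.id ℝ E))) p := by
      rw [hfe]; exact hq0
    have htot := (hq.const_mul (1 / (2 * γ))).add (hasGradientAt_iff_hasFDerivAt.mp (hg' p))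
    have hzero := hmin.hasFDerivAt_eq_zero htot
    set u : E := g' p - γ⁻¹ • (w - p) with hu
    have happ := congrArg (fun T : E →L[ℝ] ℝ => T u) hzero
    simp only [ContinuousLinearMap.add_apply, ContinuousLinearMap.smul_apply,
      ContinuousLinearMap.comp_apply, ContinuousLinearMap.prod_apply,
      ContinuousLinearMap.sub_apply, ContinuousLinearMap.neg_apply,
      ContinuousLinearMap.coe_id', id_eq,
      fderivInnerCLM_apply, InnerProductSpace.toDual_apply_apply,
      ContinuousLinearMap.zero_apply, smul_eq_mul, zero_sub] at happ
    have hiu : ⟪u, u⟫ = 0 := by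
      have h1 : ⟪w - p, u⟫ = ⟪u, w - p⟫ := real_inner_comm _ _
      have h2 : ⟪u, u⟫ = ⟪g' p, u⟫ - γ⁻¹ * ⟪w - p, u⟫ := by
        rw [hu, inner_sub_left, real_inner_smul_left]
      have hγne : γ ≠ 0 := ne_of_gt hγ
      rw [h2]
      have h3 : 1 / (2 * γ) * (⟪w - p, -u⟫ + ⟪-u, w - p⟫) + ⟪g' p, u⟫ = 0 := by
        simpa using happ
      rw [inner_neg_right, inner_neg_left, h1] at h3
      field_simp at h3 ⊢
      linarith
    have h4 : u = 0 := inner_self_eq_zero.mp hiu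
    have h5 := sub_eq_zero.mp h4
    rw [h5]
  -- Phi (prox w) = w
  have hleft : ∀ w : E, prox w + γ • g' (prox w) = w := by
    intro w; rw [hfoc w, smul_inv_smul₀ (ne_of_gt hγ)]; abel
  -- gradient of the regularized function
  have hnormgrad : ∀ c : E, HasGradientAt (fun x : E => ρ / 2 * ‖x‖ ^ 2) (ρ • c) c := by
    intro c
    have hid : HasFDerivAt (fun x : E => x) (ContinuousLinearMap.id ℝ E) c := hasFDerivAt_id c
    have hq0 := HasFDerivAt.inner ℝ hid hid
    have hfe : (fun x : E => ρ / 2 * ‖x‖ ^ 2) = fun x : E => ρ / 2 * (⟪x, x⟫ : ℝ) :=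
      funext fun x => by rw [real_inner_self_eq_norm_sq]
    rw [hasGradientAt_iff_hasFDerivAt, hfe]
    have h1 := hq0.const_mul (ρ / 2)
    have heq : ((ρ / 2) • ((fderivInnerCLM ℝ (c, c)).comp
        ((ContinuousLinearMap.id ℝ E).prod (ContinuousLinearMap.id ℝ E))))
        = (InnerProductSpace.toDual ℝ E) (ρ • c) := by
      apply ContinuousLinearMap.ext
      intro v
      simp only [ContinuousLinearMap.smul_apply, ContinuousLinearMap.comp_apply,
        ContinuousLinearMap.prod_apply, ContinuousLinearMap.coe_id', id_eq,
        fderivInnerCLM_apply, InnerProductSpace.toDual_apply_apply, smul_eq_mul,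
        real_inner_smul_left]
      rw [real_inner_comm v c]
      ring
    rw [← heq]
    exact h1
  -- monotonicity of g' up to ρ
  have hmono : ∀ a b : E, -(ρ * ‖a - b‖ ^ 2) ≤ ⟪g' a - g' b, a - b⟫ := by
    intro a b
    have hga : HasGradientAt (fun x : E => g x + ρ / 2 * ‖x‖ ^ 2) (g' a + ρ • a) a := by
      rw [hasGradientAt_iff_hasFDerivAt, map_add]
      exact (hasGradientAt_iff_hasFDerivAt.mp (hg' a)).add
        (hasGradientAt_iff_hasFDerivAt.mp (hnormgrad a))
    have hgb : HasGradientAt (fun x : E => g x + ρ / 2 * ‖x‖ ^ 2) (g' b + ρ • b) b := by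
      rw [hasGradientAt_iff_hasFDerivAt, map_add]
      exact (hasGradientAt_iff_hasFDerivAt.mp (hg' b)).add
        (hasGradientAt_iff_hasFDerivAt.mp (hnormgrad b))
    have h0 := convex_grad_mono hweak hga hgb
    have hre : (g' a + ρ • a) - (g' b + ρ • b) = (g' a - g' b) + ρ • (a - b) := by
      rw [smul_sub]; abel
    rw [hre, inner_add_left, real_inner_smul_left, real_inner_self_eq_norm_sq] at h0
    linarith
  -- injectivity of Phi
  have hinj : Function.Injective (fun z : E => z + γ • g' z) := by
    intro a b hab
    simp only [] at hab
    by_contra hne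
    have hdiff : a - b = γ • g' b - γ • g' a :=
      sub_eq_sub_iff_add_eq_add.mpr (by rw [hab]; abel)
    have hdiff' : a - b = γ • (g' b - g' a) := by rw [smul_sub]; exact hdiff
    have h1 : ‖a - b‖ ^ 2 ≤ γ * (ρ * ‖a - b‖ ^ 2) := by
      have hc : ⟪g' b - g' a, a - b⟫ = -⟪g' a - g' b, a - b⟫ := by
        rw [← neg_sub (g' a) (g' b), inner_neg_left]
      calc ‖a - b‖ ^ 2 = ⟪a - b, a - b⟫ := (real_inner_self_eq_norm_sq _).symm
        _ = γ * ⟪g' b - g' a, a - b⟫ := by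
            rw (occs := .pos [1]) [hdiff']
            rw [real_inner_smul_left]
        _ ≤ γ * (ρ * ‖a - b‖ ^ 2) := by
            rw [hc]
            have := hmono a b
            nlinarith
    have hpos : 0 < ‖a - b‖ ^ 2 := by
      have hne' : a - b ≠ 0 := sub_ne_zero.mpr hne
      exact pow_pos (norm_pos_iff.mpr hne') 2
    nlinarith
  -- prox is a left inverse of Phi
  have hprojinv : ∀ z : E, prox (z + γ • g' z) = z := by
    intro z
    exact hinj (by simpa using hleft (z + γ • g' z))
  -- g' is C¹
  have hg'c1 : ContDiff ℝ 1 g' := by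
    refine contDiff_one_iff_fderiv.mpr ⟨fun x => (hg'' x).differentiableAt, ?_⟩
    have hfd : (fderiv ℝ g') = g'' := funext fun x => (hg'' x).fderiv
    rw [hfd]; exact hg''cont
  -- prox is differentiable with derivative of norm at most 2
  have key : ∀ x : E, ∃ D : E →L[ℝ] E, HasFDerivAt prox D x ∧ ‖D‖ ≤ 2 := by
    intro x
    set p := prox x with hp
    have hLgp : ‖g'' p‖ ≤ Lg := hbound p ⟨x, rfl⟩
    have hnorm : ‖-(γ • g'' p)‖ < 1 := by
      rw [norm_neg]
      calc ‖γ • g'' p‖ ≤ ‖γ‖ * ‖g'' p‖ := ContinuousLinearMap.opNorm_smul_le γ (g'' p)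
        _ = γ * ‖g'' p‖ := by rw [Real.norm_eq_abs, abs_of_pos hγ]
        _ < 1 := by nlinarith [norm_nonneg (g'' p)]
    set u : (E →L[ℝ] E)ˣ := Units.oneSub (-(γ • g'' p)) hnorm with hu
    set e : E ≃L[ℝ] E := ContinuousLinearEquiv.unitsEquiv ℝ E u with he
    have hecoe : (e : E →L[ℝ] E) = ContinuousLinearMap.id ℝ E + γ • g'' p := by
      show (u : E →L[ℝ] E) = _
      rw [hu, Units.val_oneSub, sub_neg_eq_add]
      rfl
    have hstrict_g' : HasStrictFDerivAt g' (g'' p) p :=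
      (hg'c1.contDiffAt).hasStrictFDerivAt' (hg'' p) one_ne_zero
    have hstrictΦ : HasStrictFDerivAt (fun z : E => z + γ • g' z) (e : E →L[ℝ] E) p := by
      rw [hecoe]
      exact (hasStrictFDerivAt_id p).add (hstrict_g'.const_smul γ)
    have hinv : HasStrictFDerivAt prox ((e.symm : E →L[ℝ] E)) x := by
      have h := hstrictΦ.to_local_left_inverse (g := prox)
        (Filter.Eventually.of_forall hprojinv)
      have h' : p + γ • g' p = x := hleft x
      simpa [h'] using h
    refine ⟨(e.symm : E →L[ℝ] E), hinv.hasFDerivAt, ?_⟩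
    apply ContinuousLinearMap.opNorm_le_bound _ (by norm_num)
    intro w
    set v : E := e.symm w with hv
    have hexp : v + γ • (g'' p) v = w := by
      have h0 : (e : E →L[ℝ] E) v = w := by
        rw [hv]
        simp
      rw [hecoe] at h0
      simpa using h0
    have hb : ‖γ • (g'' p) v‖ ≤ γ * Lg * ‖v‖ := by
      rw [norm_smul, Real.norm_eq_abs, abs_of_pos hγ]
      have h1 := (g'' p).le_opNorm v
      have h2 : ‖g'' p‖ * ‖v‖ ≤ Lg * ‖v‖ := mul_le_mul_of_nonneg_right hLgp (norm_nonneg v)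
      nlinarith [norm_nonneg ((g'' p) v), norm_nonneg v]
    have h3 : ‖v‖ - γ * Lg * ‖v‖ ≤ ‖w‖ := by
      have h4 : ‖v‖ ≤ ‖v + γ • (g'' p) v‖ + ‖γ • (g'' p) v‖ := by
        have := norm_add_le (v + γ • (g'' p) v) (-(γ • (g'' p) v))
        simpa using this
      rw [hexp] at h4
      linarith
    have : ‖(e.symm : E →L[ℝ] E) w‖ = ‖v‖ := by rw [hv]; simp
    rw [this]
    nlinarith [norm_nonneg v, norm_nonneg w]
  choose D hD hDnorm using key
  -- prox is 2-Lipschitz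
  have hproxlip : ∀ x y : E, ‖prox x - prox y‖ ≤ 2 * ‖x - y‖ := by
    intro x y
    exact Convex.norm_image_sub_le_of_norm_hasFDerivWithin_le
      (fun z _ => (hD z).hasFDerivWithinAt) (fun z _ => hDnorm z) convex_univ
      (Set.mem_univ y) (Set.mem_univ x)
  -- g' ∘ prox is 2 Lg-Lipschitz
  have hGlip : ∀ x y : E, ‖g' (prox x) - g' (prox y)‖ ≤ (Lg * 2) * ‖x - y‖ := by
    intro x y
    refine Convex.norm_image_sub_le_of_norm_hasFDerivWithin_le
      (f := fun z => g' (prox z)) (f' := fun z => (g'' (prox z)).comp (D z))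
      (fun z _ => ((hg'' (prox z)).comp z (hD z)).hasFDerivWithinAt)
      (fun z _ => ?_) convex_univ (Set.mem_univ y) (Set.mem_univ x)
    calc ‖(g'' (prox z)).comp (D z)‖ ≤ ‖g'' (prox z)‖ * ‖D z‖ :=
          ContinuousLinearMap.opNorm_comp_le _ _
      _ ≤ Lg * 2 := by
          nlinarith [hbound (prox z) ⟨z, rfl⟩, hDnorm z, norm_nonneg (D z),
            norm_nonneg (g'' (prox z))]
  intro x y
  have hx1 : x - γ • (γ⁻¹ • (x - prox x)) = prox x := by
    rw [smul_inv_smul₀ (ne_of_gt hγ)]; abel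
  have hy1 : y - γ • (γ⁻¹ • (y - prox y)) = prox y := by
    rw [smul_inv_smul₀ (ne_of_gt hγ)]; abel
  rw [hx1, hy1, ← hfoc x, ← hfoc y]
  calc ‖(f' (prox x) + g' (prox x)) - (f' (prox y) + g' (prox y))‖
      = ‖(f' (prox x) - f' (prox y)) + (g' (prox x) - g' (prox y))‖ := by
        congr 1; abel
    _ ≤ ‖f' (prox x) - f' (prox y)‖ + ‖g' (prox x) - g' (prox y)‖ := norm_add_le _ _
    _ ≤ Lf * ‖prox x - prox y‖ + (Lg * 2) * ‖x - y‖ :=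
        add_le_add (hf'lip _ _) (hGlip x y)
    _ ≤ Lf * (2 * ‖x - y‖) + (Lg * 2) * ‖x - y‖ := by
        have := hproxlip x y
        nlinarith
    _ = (2 * Lf + 2 * Lg) * ‖x - y‖ := by ring

theorem psgla_drift_lipschitz (d : ℕ) (hd : 1 ≤ d) (ρ Lf Lg γ : ℝ)
    (hρ : 0 < ρ) (hLf : 0 < Lf) (hLg : 0 < Lg) (hγ : 0 < γ)
    (hγρ : γ * ρ < 1) (hγLg : γ * Lg ≤ 1 / 2)
    (f : EuclideanSpace ℝ (Fin d) → ℝ)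
    (f' : EuclideanSpace ℝ (Fin d) → EuclideanSpace ℝ (Fin d))
    (hf' : ∀ x, HasGradientAt f (f' x) x)
    (hf'lip : ∀ x y : EuclideanSpace ℝ (Fin d), ‖f' x - f' y‖ ≤ Lf * ‖x - y‖)
    (g : EuclideanSpace ℝ (Fin d) → ℝ)
    (hweak : ConvexOn ℝ Set.univ (fun x => g x + ρ / 2 * ‖x‖ ^ 2))
    (g' : EuclideanSpace ℝ (Fin d) → EuclideanSpace ℝ (Fin d))
    (g'' : EuclideanSpace ℝ (Fin d) →
      (EuclideanSpace ℝ (Fin d) →L[ℝ] EuclideanSpace ℝ (Fin d)))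
    (hg' : ∀ x, HasGradientAt g (g' x) x)
    (hg'' : ∀ x, HasFDerivAt g' (g'' x) x)
    (hg''cont : Continuous g'')
    (prox : EuclideanSpace ℝ (Fin d) → EuclideanSpace ℝ (Fin d))
    (hprox : ∀ x y : EuclideanSpace ℝ (Fin d),
      1 / (2 * γ) * ‖x - prox x‖ ^ 2 + g (prox x)
        ≤ 1 / (2 * γ) * ‖x - y‖ ^ 2 + g y)
    (hbound : ∀ z ∈ Set.range prox, ‖g'' z‖ ≤ Lg) :
    ∀ x y : EuclideanSpace ℝ (Fin d),
      ‖(f' (x - γ • (γ⁻¹ • (x - prox x))) + γ⁻¹ • (x - prox x))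
          - (f' (y - γ • (γ⁻¹ • (y - prox y))) + γ⁻¹ • (y - prox y))‖
        ≤ (2 * Lf + 2 * Lg) * ‖x - y‖ :=
  psgla_aux ρ Lf Lg γ hρ hLf hLg hγ hγρ hγLg f' hf'lip g hweak g' g'' hg' hg'' hg''cont
    prox hprox hbound
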